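/- For all integers k ≥ 4 and l ≥ 1 and every sufficiently large integer d there exists a result F of a collision in degree d of the germ at the origin of the D_k-singularity {u·v²+u^{k−1}=0} and the germ at the origin of the A_l-singularity {u²+v^{l+1}=0}, such that the germ of {F=0} at the origin is topologically equivalent to the germ at the origin of the D_{k+l+1}-singularity {u·v²+u^{k+l}=0}. -/

import Mathlib

open MvPolynomial Filter

noncomputable section

/-- Points of the complex plane ℂ². -/
abbrev Pt : Type := Fin 2 → ℂ

/-- Polynomials in the two variables `u = X 0`, `v = X 1` over ℂ. -/
abbrev Poly2 : Type := MvPolynomial (Fin 2) ℂ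

/-- The zero set of a polynomial in ℂ². -/
def zeroSet (f : Poly2) : Set Pt := {p | eval p f = 0}

/-- The germs `(V, a)` and `(W, b)` of plane curves are topologically equivalent:
there are open neighbourhoods `U ∋ a`, `U' ∋ b` and a homeomorphism `φ : U ≃ₜ U'`
with `φ a = b` carrying `V ∩ U` onto `W ∩ U'`. -/
def GermEquiv (V : Set Pt) (a : Pt) (W : Set Pt) (b : Pt) : Prop :=
  ∃ (U U' : Set Pt), IsOpen U ∧ IsOpen U' ∧ b ∈ U' ∧
    ∃ (φ : U ≃ₜ U') (ha : a ∈ U),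
      ((φ ⟨a, ha⟩ : U') : Pt) = b ∧
      ∀ x : U, (x : Pt) ∈ V ↔ ((φ x : U') : Pt) ∈ W

/-- The polynomial `f (a + ·)`, i.e. `f` translated so that `a` becomes the origin. -/
def shiftBy (a : Pt) (f : Poly2) : Poly2 := bind₁ (fun i => X i + C (a i)) f

/-- The multiplicity `mult_a f`: the least total degree of a monomial occurring
in the Taylor expansion of `f` at `a`. -/
def multAt (a : Pt) (f : Poly2) : ℕ :=
  sInf {n | homogeneousComponent n (shiftBy a f) ≠ 0}

/-- The lowest form of `f` at `a`: the homogeneous part of `f (a + ·)` of degree `mult_a f`. -/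
def lowestForm (a : Pt) (f : Poly2) : Poly2 :=
  homogeneousComponent (multAt a f) (shiftBy a f)

/-- `F` (of degree ≤ d) is a result of a collision in degree `d` of the germs at the origin
of `{fx = 0}` and `{fy = 0}`: there are curves `{Fₙ = 0}` of degree ≤ d having a singular
point of the topological type of `fx` at the origin and one of the topological type of `fy`
at a point `yₙ ≠ 0`, with `yₙ → 0` and `Fₙ → F` coefficient-wise. -/
def IsCollisionResult (d : ℕ) (fx fy F : Poly2) : Prop :=
  F.totalDegree ≤ d ∧
  ∃ (Fs : ℕ → Poly2) (y : ℕ → Pt),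
    (∀ n, (Fs n).totalDegree ≤ d) ∧
    (∀ n, y n ≠ 0) ∧
    Tendsto y atTop (nhds 0) ∧
    (∀ m : Fin 2 →₀ ℕ, Tendsto (fun n => coeff m (Fs n)) atTop (nhds (coeff m F))) ∧
    (∀ n, GermEquiv (zeroSet (Fs n)) 0 (zeroSet fx) 0) ∧
    (∀ n, GermEquiv (zeroSet (Fs n)) (y n) (zeroSet fy) 0)

lemma key_exp (n : ℕ) (w : ℂ) : Complex.exp (-(n : ℂ) * w / 2) ^ 2 * Complex.exp w ^ n = 1 := by
  rw [← Complex.exp_nat_mul, ← Complex.exp_nat_mul, ← Complex.exp_add]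
  rw [show ((2:ℕ):ℂ) * (-(n:ℂ) * w / 2) + (n:ℂ) * w = 0 by push_cast; ring, Complex.exp_zero]

lemma slit_of_abs_lt (z : ℂ) (h : ‖z - 1‖ < 1) : z ∈ Complex.slitPlane := by
  rw [Complex.mem_slitPlane_iff]
  left
  have h2 : |z.re - 1| < 1 := lt_of_le_of_lt (by simpa using Complex.abs_re_le_norm (z - 1)) h
  linarith [(abs_lt.mp h2).1]

-- coeff continuity
lemma cont_coeff_pow : ∀ (n : ℕ) (m : Fin 2 →₀ ℕ),
    Continuous fun t : ℂ => coeff m ((X 0 - C t : Poly2) ^ n) := by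
  intro n
  induction n with
  | zero => intro m; simp only [pow_zero]; exact continuous_const
  | succ n ih =>
    intro m
    have h : ∀ t : ℂ, coeff m ((X 0 - C t : Poly2) ^ (n+1)) =
        (if (0 : Fin 2) ∈ m.support then coeff (m - Finsupp.single 0 1) ((X 0 - C t : Poly2) ^ n) else 0)
          - coeff m ((X 0 - C t : Poly2) ^ n) * t := by
      intro t
      rw [pow_succ, mul_sub, coeff_sub, coeff_mul_X']
      rw [mul_comm ((X 0 - C t : Poly2) ^ n) (C t), coeff_C_mul, mul_comm]
    simp only [h]
    by_cases hm : (0 : Fin 2) ∈ m.support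
    · simp only [hm, if_true]
      exact (ih _).sub ((ih m).mul continuous_id)
    · simp only [hm, if_false]
      exact continuous_const.sub ((ih m).mul continuous_id)

def Pfam (k l : ℕ) (t : ℂ) : Poly2 := X 0 * X 1 ^ 2 + X 0 ^ (k-1) * (X 0 - C t) ^ (l+1)

lemma cont_coeff_Pfam (k l : ℕ) (m : Fin 2 →₀ ℕ) :
    Continuous fun t : ℂ => coeff m (Pfam k l t) := by
  have h : ∀ t : ℂ, coeff m (Pfam k l t) =
      (∑ x ∈ Finset.HasAntidiagonal.antidiagonal m, coeff x.1 (X 0 : Poly2) * coeff x.2 (X 1 ^ 2 : Poly2)) +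
      ∑ x ∈ Finset.HasAntidiagonal.antidiagonal m, coeff x.1 (X 0 ^ (k-1) : Poly2) * coeff x.2 ((X 0 - C t : Poly2) ^ (l+1)) := by
    intro t; rw [Pfam, coeff_add, coeff_mul, coeff_mul]
  simp only [h]
  exact continuous_const.add (continuous_finset_sum _ fun x _ =>
    continuous_const.mul (cont_coeff_pow (l+1) x.2))

lemma eval_Pfam (k l : ℕ) (t : ℂ) (p : Pt) :
    eval p (Pfam k l t) = p 0 * p 1 ^ 2 + p 0 ^ (k-1) * (p 0 - t) ^ (l+1) := by
  simp [Pfam]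

lemma Pfam_zero (k l : ℕ) (hk : 1 ≤ k) :
    Pfam k l 0 = X 0 * X 1 ^ 2 + X 0 ^ (k+l) := by
  rw [Pfam, map_zero, sub_zero, ← pow_add]
  congr 2
  omega

lemma deg_Pfam (k l : ℕ) (hk : 2 ≤ k) (hl : 1 ≤ l) (t : ℂ) : (Pfam k l t).totalDegree ≤ k + l := by
  have h1 : (X 0 * X 1 ^ 2 : Poly2).totalDegree ≤ 3 := by
    calc (X 0 * X 1 ^ 2 : Poly2).totalDegree ≤ (X 0 : Poly2).totalDegree + (X 1 ^ 2 : Poly2).totalDegree :=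
          totalDegree_mul _ _
    _ ≤ 1 + 2 * 1 := by
        gcongr
        · exact le_of_eq (totalDegree_X 0)
        · exact le_trans (totalDegree_pow _ _) (by rw [totalDegree_X])
    _ ≤ 3 := by norm_num
  have h2 : (X 0 - C t : Poly2).totalDegree ≤ 1 := by
    rw [sub_eq_add_neg, ← map_neg]
    exact le_trans (totalDegree_add _ _) (by simp [totalDegree_X, totalDegree_C])
  have h3 : (X 0 ^ (k-1) * (X 0 - C t) ^ (l+1) : Poly2).totalDegree ≤ k + l := by
    calc (X 0 ^ (k-1) * (X 0 - C t) ^ (l+1) : Poly2).totalDegree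
        ≤ (X 0 ^ (k-1) : Poly2).totalDegree + ((X 0 - C t) ^ (l+1) : Poly2).totalDegree :=
          totalDegree_mul _ _
      _ ≤ (k-1) * 1 + (l+1) * 1 := by
          gcongr
          · exact le_trans (totalDegree_pow _ _) (by rw [totalDegree_X])
          · exact le_trans (totalDegree_pow _ _) (by gcongr)
      _ ≤ k + l := by omega
  exact le_trans (totalDegree_add _ _) (by simp only [max_le_iff]; omega)

lemma germEquiv_refl (V : Set Pt) (a : Pt) : GermEquiv V a V a :=
  ⟨Set.univ, Set.univ, isOpen_univ, isOpen_univ, trivial,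
    Homeomorph.refl _, trivial, rfl, fun _ => Iff.rfl⟩

/-- Build a homeomorphism between open subsets from explicit maps. -/
def mk2 (f g : Pt → Pt) (U U' : Set Pt) (hf : ∀ p ∈ U, f p ∈ U') (hg : ∀ q ∈ U', g q ∈ U)
    (hfg : ∀ p ∈ U, g (f p) = p) (hgf : ∀ q ∈ U', f (g q) = q)
    (hcf : ContinuousOn f U) (hcg : ContinuousOn g U') : U ≃ₜ U' where
  toFun := fun x => ⟨f x, hf x x.2⟩
  invFun := fun y => ⟨g y, hg y y.2⟩
  left_inv := fun x => Subtype.ext (hfg x x.2)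
  right_inv := fun y => Subtype.ext (hgf y y.2)
  continuous_toFun := (hcf.comp_continuous continuous_subtype_val fun x => x.2).subtype_mk _
  continuous_invFun := (hcg.comp_continuous continuous_subtype_val fun y => y.2).subtype_mk _

lemma pt_eta (p : Pt) : ![p 0, p 1] = p := by
  funext i; fin_cases i <;> rfl


set_option maxHeartbeats 1000000 in
lemma germA (k l : ℕ) (t : ℂ) (ht : t ≠ 0) :
    GermEquiv (zeroSet (Pfam k l t)) 0 (zeroSet (X 0 * X 1 ^ 2 + X 0 ^ (k-1))) 0 := by
  set g : ℂ → ℂ := fun u =>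
    Complex.exp (-((l+1 : ℕ) : ℂ) * (Complex.log (-t) + Complex.log (1 - u/t)) / 2) with hg
  have hg0 : ∀ u, g u ≠ 0 := fun u => Complex.exp_ne_zero _
  have htpos : 0 < ‖t‖ := norm_pos_iff.mpr ht
  have habs : ∀ u : ℂ, ‖u‖ < ‖t‖ → ‖(1 - u/t) - 1‖ < 1 := by
    intro u hu
    have h1 : (1 - u/t) - 1 = -(u/t) := by ring
    rw [h1, norm_neg, norm_div, div_lt_one htpos]
    exact hu
  have hne : ∀ u : ℂ, ‖u‖ < ‖t‖ → (1 - u/t) ≠ 0 := by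
    intro u hu h0
    have := habs u hu
    rw [h0] at this
    simp at this
  have hkey : ∀ u : ℂ, ‖u‖ < ‖t‖ → g u ^ 2 * (u - t) ^ (l+1) = 1 := by
    intro u hu
    have hexp : Complex.exp (Complex.log (-t) + Complex.log (1 - u/t)) = u - t := by
      rw [Complex.exp_add, Complex.exp_log (neg_ne_zero.mpr ht), Complex.exp_log (hne u hu)]
      field_simp
      ring
    have h2 := key_exp (l+1) (Complex.log (-t) + Complex.log (1 - u/t))
    rw [hexp] at h2
    exact h2
  have hgc : ContinuousOn g {u : ℂ | ‖u‖ < ‖t‖} := by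
    intro u hu
    apply ContinuousAt.continuousWithinAt
    have hmem : (1 - u/t) ∈ Complex.slitPlane := slit_of_abs_lt _ (habs u hu)
    have hl1 : ContinuousAt (fun u : ℂ => Complex.log (1 - u/t)) u :=
      ContinuousAt.clog (by fun_prop) hmem
    exact (((continuousAt_const.add hl1).const_mul _).div_const _).cexp
  set U : Set Pt := {p | ‖p 0‖ < ‖t‖} with hU
  have hUopen : IsOpen U := isOpen_lt (continuous_norm.comp (continuous_apply 0)) continuous_const
  have h0U : (0 : Pt) ∈ U := by
    show ‖(0 : Pt) 0‖ < ‖t‖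
    simpa using htpos
  set φf : Pt → Pt := fun p => ![p 0, p 1 * g (p 0)] with hφf
  set φg : Pt → Pt := fun p => ![p 0, p 1 * (g (p 0))⁻¹] with hφg
  have hφf0 : ∀ p, φf p 0 = p 0 := fun p => rfl
  have hφg0 : ∀ p, φg p 0 = p 0 := fun p => rfl
  have hmapsf : ∀ p ∈ U, φf p ∈ U := by
    intro p hp
    show ‖φf p 0‖ < ‖t‖
    rw [hφf0]
    exact hp
  have hmapsg : ∀ p ∈ U, φg p ∈ U := by
    intro p hp
    show ‖φg p 0‖ < ‖t‖
    rw [hφg0]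
    exact hp
  have hinv1 : ∀ p ∈ U, φg (φf p) = p := by
    intro p _
    rw [hφg, hφf]
    simp only [Matrix.cons_val_zero, Matrix.cons_val_one, Matrix.head_cons]
    rw [mul_inv_cancel_right₀ (hg0 _)]
    exact pt_eta p
  have hinv2 : ∀ p ∈ U, φf (φg p) = p := by
    intro p _
    rw [hφg, hφf]
    simp only [Matrix.cons_val_zero, Matrix.cons_val_one, Matrix.head_cons]
    rw [inv_mul_cancel_right₀ (hg0 _)]
    exact pt_eta p
  have hcont : ∀ (gg : ℂ → ℂ), ContinuousOn gg {u : ℂ | ‖u‖ < ‖t‖} →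
      ContinuousOn (fun p : Pt => ![p 0, p 1 * gg (p 0)]) U := by
    intro gg hgg
    rw [continuousOn_pi]
    intro i
    fin_cases i
    · simpa using (continuous_apply (0 : Fin 2)).continuousOn
    · simp only [Matrix.cons_val_one, Matrix.head_cons]
      exact (continuous_apply (1 : Fin 2)).continuousOn.mul
        (hgg.comp (continuous_apply (0 : Fin 2)).continuousOn fun p hp => hp)
  refine ⟨U, U, hUopen, hUopen, h0U,
    mk2 φf φg U U hmapsf hmapsg hinv1 hinv2 (by rw [hφf]; exact hcont g hgc)
      (by rw [hφg]; exact hcont _ (hgc.inv₀ fun u _ => hg0 u)), h0U, ?_, ?_⟩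
  · show φf 0 = 0
    rw [hφf]
    funext i; fin_cases i <;> simp
  · rintro ⟨p, hp⟩
    show eval p (Pfam k l t) = 0 ↔ eval (φf p) _ = 0
    have hev : eval (φf p) (X 0 * X 1 ^ 2 + X 0 ^ (k-1) : Poly2)
        = p 0 * (p 1 * g (p 0)) ^ 2 + p 0 ^ (k-1) := by
      rw [hφf]; simp
    have hpU : ‖p 0‖ < ‖t‖ := hp
    have hpt : p 0 - t ≠ 0 := by
      intro h0
      rw [sub_eq_zero] at h0
      rw [h0] at hpU
      exact lt_irrefl _ hpU
    have hid : eval p (Pfam k l t)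
        = (p 0 - t) ^ (l+1) * eval (φf p) (X 0 * X 1 ^ 2 + X 0 ^ (k-1) : Poly2) := by
      rw [hev, eval_Pfam]
      linear_combination (-(p 0 * p 1 ^ 2)) * hkey (p 0) hpU
    rw [hid, mul_eq_zero]
    have hne2 : (p 0 - t) ^ (l+1) ≠ 0 := pow_ne_zero _ hpt
    tauto

set_option maxHeartbeats 1000000 in
lemma germB (k l : ℕ) (hk2 : 2 ≤ k) (t : ℂ) (ht : t ≠ 0) :
    GermEquiv (zeroSet (Pfam k l t)) ![t, 0] (zeroSet (X 0 ^ 2 + X 1 ^ (l+1))) 0 := by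
  set a : ℂ → ℂ := fun u =>
    Complex.exp (-((k-2 : ℕ) : ℂ) * (Complex.log t + Complex.log (u/t)) / 2) with ha
  have ha0 : ∀ u, a u ≠ 0 := fun u => Complex.exp_ne_zero _
  have htpos : 0 < ‖t‖ := norm_pos_iff.mpr ht
  have habs : ∀ u : ℂ, ‖u - t‖ < ‖t‖ → ‖(u/t) - 1‖ < 1 := by
    intro u hu
    have h1 : u/t - 1 = (u - t)/t := by field_simp
    rw [h1, norm_div, div_lt_one htpos]
    exact hu
  have hne : ∀ u : ℂ, ‖u - t‖ < ‖t‖ → u ≠ 0 := by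
    intro u hu h0
    rw [h0] at hu
    simp at hu
  have hkey : ∀ u : ℂ, ‖u - t‖ < ‖t‖ → u ^ (k-2) * a u ^ 2 = 1 := by
    intro u hu
    have hut : u / t ≠ 0 := div_ne_zero (hne u hu) ht
    have hexp : Complex.exp (Complex.log t + Complex.log (u/t)) = u := by
      rw [Complex.exp_add, Complex.exp_log ht, Complex.exp_log hut]
      field_simp
    have h2 := key_exp (k-2) (Complex.log t + Complex.log (u/t))
    rw [hexp] at h2
    rw [mul_comm] at h2
    exact h2
  have hac : ContinuousOn a {u : ℂ | ‖u - t‖ < ‖t‖} := by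
    intro u hu
    apply ContinuousAt.continuousWithinAt
    have hmem : (u/t) ∈ Complex.slitPlane := slit_of_abs_lt _ (habs u hu)
    have hl1 : ContinuousAt (fun u : ℂ => Complex.log (u/t)) u :=
      ContinuousAt.clog (by fun_prop) hmem
    exact (((continuousAt_const.add hl1).const_mul _).div_const _).cexp
  set U : Set Pt := {p | ‖p 0 - t‖ < ‖t‖} with hU
  set U' : Set Pt := {p | ‖p 1‖ < ‖t‖} with hU'
  have hUopen : IsOpen U :=
    isOpen_lt (continuous_norm.comp ((continuous_apply 0).sub continuous_const)) continuous_const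
  have hU'open : IsOpen U' := isOpen_lt (continuous_norm.comp (continuous_apply 1)) continuous_const
  have h0U' : (0 : Pt) ∈ U' := by
    show ‖(0 : Pt) 1‖ < ‖t‖
    simpa using htpos
  set ψf : Pt → Pt := fun p => ![p 1 * a (p 0), p 0 - t] with hψf
  set ψg : Pt → Pt := fun q => ![q 1 + t, q 0 * (a (q 1 + t))⁻¹] with hψg
  have hmapsf : ∀ p ∈ U, ψf p ∈ U' := by
    intro p hp
    show ‖ψf p 1‖ < ‖t‖
    show ‖p 0 - t‖ < ‖t‖
    exact hp
  have hmapsg : ∀ q ∈ U', ψg q ∈ U := by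
    intro q hq
    show ‖ψg q 0 - t‖ < ‖t‖
    show ‖q 1 + t - t‖ < ‖t‖
    rw [add_sub_cancel_right]
    exact hq
  have hinv1 : ∀ p ∈ U, ψg (ψf p) = p := by
    intro p _
    rw [hψg, hψf]
    simp only [Matrix.cons_val_zero, Matrix.cons_val_one, Matrix.head_cons]
    rw [sub_add_cancel, mul_inv_cancel_right₀ (ha0 _)]
    exact pt_eta p
  have hinv2 : ∀ q ∈ U', ψf (ψg q) = q := by
    intro q _
    rw [hψg, hψf]
    simp only [Matrix.cons_val_zero, Matrix.cons_val_one, Matrix.head_cons]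
    rw [add_sub_cancel_right, inv_mul_cancel_right₀ (ha0 _)]
    exact pt_eta q
  have hcf : ContinuousOn ψf U := by
    rw [hψf, continuousOn_pi]
    intro i
    fin_cases i
    · simp only [Matrix.cons_val_zero]
      exact (continuous_apply (1 : Fin 2)).continuousOn.mul
        (hac.comp ((continuous_apply (0 : Fin 2)).continuousOn) fun p hp => hp)
    · simp only [Matrix.cons_val_one, Matrix.head_cons]
      exact ((continuous_apply (0 : Fin 2)).sub continuous_const).continuousOn
  have hcg : ContinuousOn ψg U' := by
    rw [hψg, continuousOn_pi]
    intro i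
    have hmaps2 : ∀ q : Pt, q ∈ U' → q 1 + t ∈ {u : ℂ | ‖u - t‖ < ‖t‖} := by
      intro q hq
      show ‖q 1 + t - t‖ < ‖t‖
      rw [add_sub_cancel_right]
      exact hq
    fin_cases i
    · simp only [Matrix.cons_val_zero]
      exact ((continuous_apply (1 : Fin 2)).add continuous_const).continuousOn
    · simp only [Matrix.cons_val_one, Matrix.head_cons]
      exact (continuous_apply (0 : Fin 2)).continuousOn.mul
        ((hac.comp (((continuous_apply (1 : Fin 2)).add continuous_const).continuousOn) hmaps2).inv₀
          fun q _ => ha0 _)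
  have haU : (![t, 0] : Pt) ∈ U := by
    show ‖(![t, 0] : Pt) 0 - t‖ < ‖t‖
    simpa using htpos
  refine ⟨U, U', hUopen, hU'open, h0U',
    mk2 ψf ψg U U' hmapsf hmapsg hinv1 hinv2 hcf hcg, haU, ?_, ?_⟩
  · show ψf ![t, 0] = 0
    rw [hψf]
    funext i; fin_cases i <;> simp
  · rintro ⟨p, hp⟩
    show eval p (Pfam k l t) = 0 ↔ eval (ψf p) _ = 0
    have hev : eval (ψf p) (X 0 ^ 2 + X 1 ^ (l+1) : Poly2)
        = (p 1 * a (p 0)) ^ 2 + (p 0 - t) ^ (l+1) := by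
      rw [hψf]; simp
    have hpU : ‖p 0 - t‖ < ‖t‖ := hp
    have hp0 : p 0 ≠ 0 := hne _ hpU
    have hps : p 0 ^ (k-1) = p 0 ^ (k-2) * p 0 := by
      rw [← pow_succ]
      congr 1
      omega
    have hid : eval p (Pfam k l t)
        = p 0 ^ (k-1) * eval (ψf p) (X 0 ^ 2 + X 1 ^ (l+1) : Poly2) := by
      rw [hev, eval_Pfam, hps]
      linear_combination (-(p 0 * p 1 ^ 2)) * hkey (p 0) hpU
    rw [hid, mul_eq_zero]
    have hne2 : p 0 ^ (k-1) ≠ 0 := pow_ne_zero _ hp0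
    tauto


/-- For all `k ≥ 4`, `l ≥ 1`, for every sufficiently large degree `d` there
is a result of a collision in degree `d` of a `D_k`-singularity `u·v² + u^(k−1)` and an
`A_l`-singularity `u² + v^(l+1)` whose germ at the origin is topologically equivalent to the
`D_(k+l+1)`-singularity `u·v² + u^(k+l)`. -/
theorem Dk_plus_Al_collision (k l : ℕ) (hk : 4 ≤ k) (hl : 1 ≤ l) :
    ∃ D : ℕ, ∀ d : ℕ, D ≤ d → ∃ F : Poly2,
      IsCollisionResult d (X 0 * X 1 ^ 2 + X 0 ^ (k-1)) (X 0 ^ 2 + X 1 ^ (l+1)) F ∧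
      GermEquiv (zeroSet F) 0 (zeroSet (X 0 * X 1 ^ 2 + X 0 ^ (k+l))) 0 := by
  refine ⟨k + l, fun d hd => ?_⟩
  set tseq : ℕ → ℂ := fun n => ((1 / ((n:ℝ)+1) : ℝ) : ℂ) with htseq
  have htne : ∀ n, tseq n ≠ 0 := by
    intro n
    rw [htseq]
    simp only [ne_eq, Complex.ofReal_eq_zero]
    positivity
  have htt : Tendsto tseq atTop (nhds 0) := by
    rw [htseq]
    have := tendsto_one_div_add_atTop_nhds_zero_nat (𝕜 := ℝ)
    have h2 : Tendsto (fun n : ℕ => ((1/((n:ℝ)+1) : ℝ) : ℂ)) atTop (nhds ((0:ℝ):ℂ)) :=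
      (Complex.continuous_ofReal.tendsto 0).comp this
    simpa using h2
  refine ⟨X 0 * X 1 ^ 2 + X 0 ^ (k+l), ⟨?_, fun n => Pfam k l (tseq n), fun n => ![tseq n, 0],
    fun n => le_trans (deg_Pfam k l (by omega) hl _) hd, ?_, ?_, ?_, ?_, ?_⟩, germEquiv_refl _ _⟩
  · rw [← Pfam_zero k l (by omega)]
    exact le_trans (deg_Pfam k l (by omega) hl _) hd
  · intro n h
    have := congrFun h 0
    simp only [Matrix.cons_val_zero, Pi.zero_apply] at this
    exact htne n this
  · rw [tendsto_pi_nhds]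
    intro i
    fin_cases i
    · simpa using htt
    · simp only [Matrix.cons_val_one, Matrix.head_cons, Pi.zero_apply]
      exact tendsto_const_nhds
  · intro m
    have h1 := ((cont_coeff_Pfam k l m).tendsto 0).comp htt
    rw [Pfam_zero k l (by omega)] at h1
    exact h1
  · exact fun n => germA k l (tseq n) (htne n)
  · exact fun n => germB k l (by omega) (tseq n) (htne n)

end
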